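/- Let n ≥ 1 and let x, y ∈ Bⁿ. Then j_{Bⁿ}(x,y) ≤ c_{Bⁿ}(x,y). -/

import Mathlib

open Metric Set Real

/-- The triangular ratio metric of `G`. -/
noncomputable def sMet {E : Type*} [MetricSpace E] (G : Set E) (x y : E) : ℝ :=
  sSup ((fun z => dist x y / (dist x z + dist z y)) '' frontier G)

/-- The Cassinian metric of `G`. -/
noncomputable def cMet {E : Type*} [MetricSpace E] (G : Set E) (x y : E) : ℝ :=
  sSup ((fun z => dist x y / (dist x z * dist z y)) '' frontier G)

/-- The distance ratio metric of `G`. -/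
noncomputable def jMet {E : Type*} [MetricSpace E] (G : Set E) (x y : E) : ℝ :=
  Real.log (1 + dist x y / min (infDist x (frontier G)) (infDist y (frontier G)))

lemma key_log (u : ℝ) (hu : 0 ≤ u) : Real.log (1 + u) ≤ u * (2 + u) / (2 * (1 + u)) := by
  have h1 : (0:ℝ) < 1 + u := by linarith
  have h2 : Real.log (1 + u) ≤ Real.sinh (Real.log (1 + u)) :=
    Real.self_le_sinh_iff.mpr (Real.log_nonneg (by linarith))
  rw [Real.sinh_log h1] at h2
  have h3 : ((1 + u) - (1 + u)⁻¹) / 2 = u * (2 + u) / (2 * (1 + u)) := by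
    field_simp
    ring
  linarith [h3 ▸ h2]

lemma key_ineq (m r : ℝ) (hm : 0 < m) (hr : 0 < r) (h2 : r + 2 * m ≤ 2) :
    Real.log (1 + r / m) ≤ r / (m * (m + r)) := by
  have hu : 0 ≤ r / m := by positivity
  have h := key_log (r / m) hu
  have e1 : (r / m) * (2 + r / m) / (2 * (1 + r / m)) = r * (2 * m + r) / (2 * m * (m + r)) := by
    field_simp
  rw [e1] at h
  refine h.trans ?_
  rw [div_le_div_iff₀ (by positivity) (by positivity)]
  have hkey : 0 ≤ r * (m * (m + r)) * (2 - (2 * m + r)) :=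
    mul_nonneg (mul_nonneg hr.le (mul_pos hm (add_pos hm hr)).le) (by linarith)
  nlinarith [hkey]

lemma jMet_symm {E : Type*} [MetricSpace E] (G : Set E) (x y : E) :
    jMet G x y = jMet G y x := by
  unfold jMet
  rw [dist_comm, min_comm]

lemma cMet_symm {E : Type*} [MetricSpace E] (G : Set E) (x y : E) :
    cMet G x y = cMet G y x := by
  unfold cMet
  have : (fun z => dist x y / (dist x z * dist z y)) =
      (fun z => dist y x / (dist y z * dist z x)) := by
    funext z
    rw [dist_comm x y, dist_comm x z, dist_comm z y, mul_comm]
  rw [this]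

section Main

variable (n : ℕ)

lemma infDist_sphere_eq (n : ℕ) (hn : 1 ≤ n) (w : EuclideanSpace ℝ (Fin n)) (hw : ‖w‖ ≤ 1) :
    infDist w (sphere (0 : EuclideanSpace ℝ (Fin n)) 1) = 1 - ‖w‖ := by
  set e : EuclideanSpace ℝ (Fin n) := EuclideanSpace.single (⟨0, hn⟩ : Fin n) (1:ℝ) with he
  have hne : ‖e‖ = 1 := by
    rw [he, EuclideanSpace.norm_single]
    norm_num
  have hnonempty : (sphere (0 : EuclideanSpace ℝ (Fin n)) 1).Nonempty :=
    ⟨e, mem_sphere_zero_iff_norm.mpr hne⟩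
  apply le_antisymm
  · by_cases hw0 : w = 0
    · subst hw0
      have : dist (0 : EuclideanSpace ℝ (Fin n)) e = 1 := by
        rw [dist_eq_norm, zero_sub, norm_neg, hne]
      simpa [this] using infDist_le_dist_of_mem (x := (0 : EuclideanSpace ℝ (Fin n)))
        (mem_sphere_zero_iff_norm.mpr hne)
    · have hwpos : 0 < ‖w‖ := norm_pos_iff.mpr hw0
      set z : EuclideanSpace ℝ (Fin n) := ‖w‖⁻¹ • w with hz
      have hzn : ‖z‖ = 1 := by
        rw [hz, norm_smul, norm_inv, norm_norm, inv_mul_cancel₀ hwpos.ne']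
      have hzmem : z ∈ sphere (0 : EuclideanSpace ℝ (Fin n)) 1 :=
        mem_sphere_zero_iff_norm.mpr hzn
      have hdist : dist w z = 1 - ‖w‖ := by
        rw [dist_eq_norm, hz]
        have : w - ‖w‖⁻¹ • w = (1 - ‖w‖⁻¹) • w := by
          rw [sub_smul, one_smul]
        rw [this, norm_smul, Real.norm_eq_abs]
        have h1 : (1:ℝ) ≤ ‖w‖⁻¹ := (one_le_inv_iff₀).mpr ⟨hwpos, hw⟩
        rw [abs_of_nonpos (by linarith)]
        field_simp
        ring
      calc infDist w (sphere (0 : EuclideanSpace ℝ (Fin n)) 1) ≤ dist w z :=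
            infDist_le_dist_of_mem hzmem
        _ = 1 - ‖w‖ := hdist
  · rw [infDist_eq_iInf]
    haveI : Nonempty ↥(sphere (0 : EuclideanSpace ℝ (Fin n)) 1) := hnonempty.coe_sort
    apply le_ciInf
    intro z
    have hz : ‖(z : EuclideanSpace ℝ (Fin n))‖ = 1 :=
      mem_sphere_zero_iff_norm.mp z.2
    calc 1 - ‖w‖ = ‖(z : EuclideanSpace ℝ (Fin n))‖ - ‖w‖ := by rw [hz]
      _ ≤ ‖(z : EuclideanSpace ℝ (Fin n)) - w‖ := norm_sub_norm_le _ _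
      _ = dist w (z : EuclideanSpace ℝ (Fin n)) := by rw [dist_eq_norm, norm_sub_rev]

lemma bdd_above_cassinian (n : ℕ) (x y : EuclideanSpace ℝ (Fin n))
    (hx : ‖x‖ < 1) (hy : ‖y‖ < 1) :
    BddAbove ((fun z => dist x y / (dist x z * dist z y)) ''
      sphere (0 : EuclideanSpace ℝ (Fin n)) 1) := by
  refine ⟨dist x y / ((1 - ‖x‖) * (1 - ‖y‖)), ?_⟩
  rintro v ⟨z, hz, rfl⟩
  have hzn : ‖z‖ = 1 := mem_sphere_zero_iff_norm.mp hz
  have h1 : 1 - ‖x‖ ≤ dist x z := by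
    calc 1 - ‖x‖ = ‖z‖ - ‖x‖ := by rw [hzn]
      _ ≤ ‖z - x‖ := norm_sub_norm_le _ _
      _ = dist x z := by rw [dist_eq_norm, norm_sub_rev]
  have h2 : 1 - ‖y‖ ≤ dist z y := by
    calc 1 - ‖y‖ = ‖z‖ - ‖y‖ := by rw [hzn]
      _ ≤ ‖z - y‖ := norm_sub_norm_le _ _
      _ = dist z y := dist_eq_norm z y |>.symm
  exact div_le_div_of_nonneg_left dist_nonneg
    (mul_pos (by linarith) (by linarith))
    (mul_le_mul h1 h2 (by linarith) dist_nonneg)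

lemma jMet_le_cMet_aux (n : ℕ) (hn : 1 ≤ n) (x y : EuclideanSpace ℝ (Fin n))
    (hx : x ∈ Metric.ball (0 : EuclideanSpace ℝ (Fin n)) 1)
    (hy : y ∈ Metric.ball (0 : EuclideanSpace ℝ (Fin n)) 1)
    (hyx : ‖y‖ ≤ ‖x‖) :
    jMet (Metric.ball (0 : EuclideanSpace ℝ (Fin n)) 1) x y ≤
      cMet (Metric.ball (0 : EuclideanSpace ℝ (Fin n)) 1) x y := by
  have hx1 : ‖x‖ < 1 := mem_ball_zero_iff.mp hx
  have hy1 : ‖y‖ < 1 := mem_ball_zero_iff.mp hy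
  have hfr : frontier (Metric.ball (0 : EuclideanSpace ℝ (Fin n)) 1) =
      sphere (0 : EuclideanSpace ℝ (Fin n)) 1 := frontier_ball 0 one_ne_zero
  have hbdd := bdd_above_cassinian n x y hx1 hy1
  have e : EuclideanSpace ℝ (Fin n) := EuclideanSpace.single (⟨0, hn⟩ : Fin n) (1:ℝ)
  by_cases hxy : x = y
  · subst hxy
    have hj : jMet (Metric.ball (0 : EuclideanSpace ℝ (Fin n)) 1) x x = 0 := by
      unfold jMet
      simp
    rw [hj]
    unfold cMet
    rw [hfr]
    set e : EuclideanSpace ℝ (Fin n) := EuclideanSpace.single (⟨0, hn⟩ : Fin n) (1:ℝ) with he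
    have hne : ‖e‖ = 1 := by rw [he, EuclideanSpace.norm_single]; norm_num
    have hemem : e ∈ sphere (0 : EuclideanSpace ℝ (Fin n)) 1 :=
      mem_sphere_zero_iff_norm.mpr hne
    exact le_csSup hbdd ⟨e, hemem, by simp⟩
  · have hxne : x ≠ 0 := by
      intro h0
      apply hxy
      have : ‖y‖ ≤ 0 := by simpa [h0] using hyx
      have hy0 : y = 0 := norm_le_zero_iff.mp this
      rw [h0, hy0]
    have hapos : 0 < ‖x‖ := norm_pos_iff.mpr hxne
    set m : ℝ := 1 - ‖x‖ with hm
    set r : ℝ := dist x y with hrdef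
    have hmpos : 0 < m := by rw [hm]; linarith
    have hrpos : 0 < r := dist_pos.mpr hxy
    have hr2 : r + 2 * m ≤ 2 := by
      have : r ≤ ‖x‖ + ‖y‖ := by
        rw [hrdef, dist_eq_norm]
        exact norm_sub_le x y
      rw [hm]
      linarith
    -- the boundary point
    set z : EuclideanSpace ℝ (Fin n) := ‖x‖⁻¹ • x with hz
    have hzn : ‖z‖ = 1 := by
      rw [hz, norm_smul, norm_inv, norm_norm, inv_mul_cancel₀ hapos.ne']
    have hzmem : z ∈ sphere (0 : EuclideanSpace ℝ (Fin n)) 1 :=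
      mem_sphere_zero_iff_norm.mpr hzn
    have hdxz : dist x z = m := by
      rw [dist_eq_norm, hz]
      have h1 : x - ‖x‖⁻¹ • x = (1 - ‖x‖⁻¹) • x := by rw [sub_smul, one_smul]
      rw [h1, norm_smul, Real.norm_eq_abs]
      have h2 : (1:ℝ) ≤ ‖x‖⁻¹ := (one_le_inv_iff₀).mpr ⟨hapos, hx1.le⟩
      rw [abs_of_nonpos (by linarith), hm]
      field_simp
      ring
    have hdzy_pos : 0 < dist z y := by
      have : 1 - ‖y‖ ≤ dist z y := by
        calc 1 - ‖y‖ = ‖z‖ - ‖y‖ := by rw [hzn]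
          _ ≤ ‖z - y‖ := norm_sub_norm_le _ _
          _ = dist z y := (dist_eq_norm z y).symm
      linarith
    have hdzy : dist z y ≤ m + r := by
      calc dist z y ≤ dist z x + dist x y := dist_triangle z x y
        _ = m + r := by rw [dist_comm z x, hdxz, hrdef]
    -- rewrite jMet
    have hix := infDist_sphere_eq n hn x hx1.le
    have hiy := infDist_sphere_eq n hn y hy1.le
    have hmin : min (infDist x (sphere (0 : EuclideanSpace ℝ (Fin n)) 1))
        (infDist y (sphere (0 : EuclideanSpace ℝ (Fin n)) 1)) = m := by
      rw [hix, hiy, hm]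
      exact min_eq_left (by linarith)
    have hj : jMet (Metric.ball (0 : EuclideanSpace ℝ (Fin n)) 1) x y =
        Real.log (1 + r / m) := by
      unfold jMet
      rw [hfr, hmin, hrdef]
    rw [hj]
    have step1 : Real.log (1 + r / m) ≤ r / (m * (m + r)) := key_ineq m r hmpos hrpos hr2
    have step2 : r / (m * (m + r)) ≤ r / (dist x z * dist z y) := by
      rw [hdxz]
      exact div_le_div_of_nonneg_left hrpos.le (mul_pos hmpos hdzy_pos)
        (mul_le_mul_of_nonneg_left hdzy hmpos.le)
    have step3 : r / (dist x z * dist z y) ≤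
        cMet (Metric.ball (0 : EuclideanSpace ℝ (Fin n)) 1) x y := by
      unfold cMet
      rw [hfr]
      exact le_csSup hbdd ⟨z, hzmem, by rw [hrdef]⟩
    linarith

end Main

/-- for `x, y ∈ Bⁿ`, `j_{Bⁿ}(x,y) ≤ c_{Bⁿ}(x,y)`. -/
theorem jMet_le_cMet (n : ℕ) (hn : 1 ≤ n) (x y : EuclideanSpace ℝ (Fin n))
    (hx : x ∈ Metric.ball (0 : EuclideanSpace ℝ (Fin n)) 1)
    (hy : y ∈ Metric.ball (0 : EuclideanSpace ℝ (Fin n)) 1) :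
    jMet (Metric.ball (0 : EuclideanSpace ℝ (Fin n)) 1) x y ≤
      cMet (Metric.ball (0 : EuclideanSpace ℝ (Fin n)) 1) x y := by
  rcases le_total ‖y‖ ‖x‖ with h | h
  · exact jMet_le_cMet_aux n hn x y hx hy h
  · rw [jMet_symm, cMet_symm]
    exact jMet_le_cMet_aux n hn y x hy hx h
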